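/- Let n be a positive natural number and let x_1, ..., x_n be nonnegative real numbers with arithmetic mean A = (x_1 + ... + x_n)/n and geometric mean G = (x_1 x_2 ... x_n)^(1/n). Then A - G = ∑_{k=1}^∞ 2^{k-1} G^{1 - 1/2^{k-1}} · (1/n) ∑_{i=1}^n ( x_i^{1/2^k} - G^{1/2^k} )^2, where the infinite series on the right-hand side converges to A - G. -/

import Mathlib

open Finset Real Filter Topology

private lemma cauchy_aux (m c d E Sq Sp g K : ℝ) (hm : m ≠ 0) (h1 : c * (d * d) = g)
    (h2 : c * d = E) :
    K * c * ((1 / m) * (Sq - 2 * d * Sp + m * (d * d)))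
      = K * (c * ((1 / m) * Sq) - g) - K * 2 * (E * ((1 / m) * Sp) - g) := by
  rw [← h1, ← h2]
  field_simp
  ring

theorem cauchy_formula (n : ℕ) (hn : 0 < n) (x : Fin n → ℝ) (hx : ∀ i, 0 ≤ x i)
    (A G : ℝ) (hA : A = (∑ i, x i) / n) (hG : G = (∏ i, x i) ^ ((1 : ℝ) / n)) :
    HasSum
      (fun k : ℕ =>
        (2 : ℝ) ^ k * G ^ (1 - 1 / 2 ^ k : ℝ) *
          ((1 / n : ℝ) *
            ∑ i, (x i ^ ((1 : ℝ) / 2 ^ (k + 1)) - G ^ ((1 : ℝ) / 2 ^ (k + 1))) ^ 2))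
      (A - G) := by
  have hn' : (n : ℝ) ≠ 0 := Nat.cast_ne_zero.2 hn.ne'
  have hG0 : 0 ≤ G := hG ▸ Real.rpow_nonneg (Finset.prod_nonneg fun i _ => hx i) _
  set t : ℕ → ℝ := fun k =>
        (2 : ℝ) ^ k * G ^ (1 - 1 / 2 ^ k : ℝ) *
          ((1 / n : ℝ) *
            ∑ i, (x i ^ ((1 : ℝ) / 2 ^ (k + 1)) - G ^ ((1 : ℝ) / 2 ^ (k + 1))) ^ 2) with ht
  set u : ℕ → ℝ := fun k =>
        (2 : ℝ) ^ k * (G ^ (1 - 1 / 2 ^ k : ℝ) * ((1 / n : ℝ) * ∑ i, x i ^ ((1 : ℝ) / 2 ^ k)) - G)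
    with hu
  have htnn : ∀ k, 0 ≤ t k := by
    intro k
    apply mul_nonneg (mul_nonneg (by positivity) (Real.rpow_nonneg hG0 _))
    exact mul_nonneg (by positivity) (Finset.sum_nonneg fun i _ => sq_nonneg _)
  rw [hasSum_iff_tendsto_nat_of_nonneg htnn]
  -- telescoping identity
  have key : ∀ k, t k = u k - u (k + 1) := by
    intro k
    have hp : ((1 : ℝ) / 2 ^ (k + 1)) + ((1 : ℝ) / 2 ^ (k + 1)) = (1 : ℝ) / 2 ^ k := by
      rw [pow_succ]; field_simp; ring
    have hpne : ((1 : ℝ) / 2 ^ (k + 1)) + ((1 : ℝ) / 2 ^ (k + 1)) ≠ 0 := by positivity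
    have hq1 : (1 - (1 : ℝ) / 2 ^ k) + ((1 : ℝ) / 2 ^ k) ≠ 0 := by norm_num
    have hplt : ((1 : ℝ) / 2 ^ (k + 1)) < 1 := by
      rw [div_lt_one (by positivity)]
      exact one_lt_pow₀ (by norm_num) (by omega)
    have hq2 : (1 - (1 : ℝ) / 2 ^ k) + ((1 : ℝ) / 2 ^ (k + 1)) ≠ 0 := by
      rw [← hp]; intro hcon; linarith
    have hGq : G ^ ((1 : ℝ) / 2 ^ (k + 1)) * G ^ ((1 : ℝ) / 2 ^ (k + 1)) = G ^ ((1 : ℝ) / 2 ^ k) := by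
      rw [← Real.rpow_add' hG0 hpne, hp]
    have h1 : G ^ (1 - (1 : ℝ) / 2 ^ k) *
        (G ^ ((1 : ℝ) / 2 ^ (k + 1)) * G ^ ((1 : ℝ) / 2 ^ (k + 1))) = G := by
      rw [hGq, ← Real.rpow_add' hG0 hq1]
      norm_num
    have h2 : G ^ (1 - (1 : ℝ) / 2 ^ k) * G ^ ((1 : ℝ) / 2 ^ (k + 1))
        = G ^ (1 - (1 : ℝ) / 2 ^ (k + 1)) := by
      rw [← Real.rpow_add' hG0 hq2]
      congr 1
      rw [← hp]; ring
    have hxq : ∀ i, x i ^ ((1 : ℝ) / 2 ^ (k + 1)) * x i ^ ((1 : ℝ) / 2 ^ (k + 1))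
        = x i ^ ((1 : ℝ) / 2 ^ k) := fun i => by
      rw [← Real.rpow_add' (hx i) hpne, hp]
    have expand : ∑ i, (x i ^ ((1 : ℝ) / 2 ^ (k + 1)) - G ^ ((1 : ℝ) / 2 ^ (k + 1))) ^ 2
        = (∑ i, x i ^ ((1 : ℝ) / 2 ^ k))
          - 2 * G ^ ((1 : ℝ) / 2 ^ (k + 1)) * (∑ i, x i ^ ((1 : ℝ) / 2 ^ (k + 1)))
          + n * (G ^ ((1 : ℝ) / 2 ^ (k + 1)) * G ^ ((1 : ℝ) / 2 ^ (k + 1))) := by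
      have hterm : ∀ i : Fin n, (x i ^ ((1 : ℝ) / 2 ^ (k + 1)) - G ^ ((1 : ℝ) / 2 ^ (k + 1))) ^ 2
          = x i ^ ((1 : ℝ) / 2 ^ k)
            - 2 * G ^ ((1 : ℝ) / 2 ^ (k + 1)) * x i ^ ((1 : ℝ) / 2 ^ (k + 1))
            + G ^ ((1 : ℝ) / 2 ^ (k + 1)) * G ^ ((1 : ℝ) / 2 ^ (k + 1)) := by
        intro i
        rw [← hxq i]; ring
      rw [Finset.sum_congr rfl fun i _ => hterm i, Finset.sum_add_distrib,
        Finset.sum_sub_distrib, ← Finset.mul_sum, Finset.sum_const, Finset.card_fin,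
        nsmul_eq_mul]
    simp only [ht, hu]
    rw [expand, pow_succ]
    exact cauchy_aux (n : ℝ) _ _ _ _ _ G ((2 : ℝ) ^ k) hn' h1 h2
  have hu0 : u 0 = A - G := by
    simp only [hu]
    norm_num [Real.rpow_one]
    rw [hA]; ring
  -- the remainder tends to zero
  have hulim : Tendsto u atTop (𝓝 0) := by
    rcases eq_or_lt_of_le hG0 with hGz | hGpos
    · refine Tendsto.congr' ?_ tendsto_const_nhds
      filter_upwards [eventually_ge_atTop 1] with k hk
      have hexp : (1 - 1 / 2 ^ k : ℝ) ≠ 0 := by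
        have h2k : (1 : ℝ) / 2 ^ k < 1 := by
          rw [div_lt_one (by positivity)]
          exact one_lt_pow₀ (by norm_num) (by omega)
        intro hcon; linarith
      simp only [hu, ← hGz, Real.zero_rpow hexp]
      ring
    · have hxpos : ∀ i, 0 < x i := by
        intro i
        rcases (hx i).eq_or_lt with h | h
        · exfalso
          have hprod : (∏ j, x j) = 0 := Finset.prod_eq_zero (Finset.mem_univ i) h.symm
          rw [hprod, Real.zero_rpow (one_div_ne_zero hn')] at hG
          exact absurd hG hGpos.ne'
        · exact h
      set L : Fin n → ℝ := fun i => Real.log (x i / G) with hL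
      set h : ℝ → ℝ := fun ε => (1 / n : ℝ) * ∑ i, Real.exp (ε * L i) with hh
      have hLi : ∀ i, L i = Real.log (x i) - Real.log G := fun i =>
        Real.log_div (hxpos i).ne' hGpos.ne'
      have hL0 : (1 / n : ℝ) * ∑ i, L i = 0 := by
        have hlogG : Real.log G = (1 / n : ℝ) * Real.log (∏ i, x i) := by
          rw [hG, Real.log_rpow (Finset.prod_pos fun i _ => hxpos i)]
        have hlogP : Real.log (∏ i, x i) = ∑ i, Real.log (x i) :=
          Real.log_prod fun i _ => (hxpos i).ne'
        simp only [hLi, Finset.sum_sub_distrib, Finset.sum_const, Finset.card_fin,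
          nsmul_eq_mul]
        rw [hlogG, hlogP]
        field_simp
        ring
      have hder : HasDerivAt h ((1 / n : ℝ) * ∑ i, L i) 0 := by
        have hde : ∀ i : Fin n, HasDerivAt (fun ε : ℝ => Real.exp (ε * L i)) (L i) 0 := by
          intro i
          have := (((hasDerivAt_id (0 : ℝ)).mul_const (L i)).exp)
          simpa using this
        exact (HasDerivAt.fun_sum fun i _ => hde i).const_mul _
      have hslope : Tendsto (slope h 0) (𝓝[≠] 0) (𝓝 0) := by
        have := hasDerivAt_iff_tendsto_slope.mp hder
        rwa [hL0] at this
      have hεlim : Tendsto (fun k : ℕ => (1 / 2 ^ k : ℝ)) atTop (𝓝[≠] 0) := by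
        apply tendsto_nhdsWithin_of_tendsto_nhds_of_eventually_within
        · have := tendsto_pow_atTop_nhds_zero_of_lt_one
            (by norm_num : (0:ℝ) ≤ 1/2) (by norm_num : (1:ℝ)/2 < 1)
          simpa [div_pow] using this
        · exact Eventually.of_forall fun k => by
            simp only [Set.mem_compl_iff, Set.mem_singleton_iff]
            positivity
      have huslope : ∀ k, u k = G * slope h 0 (1 / 2 ^ k : ℝ) := by
        intro k
        have hh0 : h 0 = 1 := by
          simp only [hh, zero_mul, Real.exp_zero, Finset.sum_const, Finset.card_fin,
            nsmul_eq_mul, mul_one]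
          field_simp
        have hpt : ∀ i, G ^ (1 - (1 : ℝ) / 2 ^ k) * x i ^ ((1 : ℝ) / 2 ^ k)
            = G * Real.exp ((1 / 2 ^ k : ℝ) * L i) := by
          intro i
          rw [hLi i, Real.rpow_def_of_pos hGpos, Real.rpow_def_of_pos (hxpos i),
            ← Real.exp_add]
          nth_rewrite 2 [← Real.exp_log hGpos]
          rw [← Real.exp_add]
          congr 1
          ring
        have hsum : G ^ (1 - (1 : ℝ) / 2 ^ k) * ((1 / n : ℝ) * ∑ i, x i ^ ((1 : ℝ) / 2 ^ k))
            = G * h (1 / 2 ^ k : ℝ) := by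
          simp only [hh]
          rw [show ∀ c S : ℝ, c * ((1 / n : ℝ) * S) = (1 / n : ℝ) * (c * S) from
            fun c S => by ring]
          rw [Finset.mul_sum, Finset.sum_congr rfl fun i _ => hpt i, ← Finset.mul_sum]
          ring
        simp only [hu]
        rw [hsum, slope_def_field, hh0, sub_zero]
        have h2k : (2 : ℝ) ^ k ≠ 0 := by positivity
        field_simp
      rw [show u = fun k => G * slope h 0 (1 / 2 ^ k : ℝ) from funext huslope]
      have := (hslope.comp hεlim).const_mul G
      simpa using this
  have hfin : (fun N => ∑ k ∈ Finset.range N, t k) = fun N => u 0 - u N := by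
    funext N
    rw [← Finset.sum_range_sub' u N]
    exact Finset.sum_congr rfl fun k _ => key k
  rw [hfin]
  have hfin2 : Tendsto (fun N => u 0 - u N) atTop (𝓝 (u 0 - 0)) :=
    tendsto_const_nhds.sub hulim
  rw [sub_zero] at hfin2
  rw [← hu0]
  exact hfin2
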